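/- If Γ is φ-simple, then the φ-splice C₂ ▵_φ C₁ equals A_Γ (as functions on [0,1]²). -/

import Mathlib

open Set MeasureTheory

/-- `Γ̂(t) = t - Γ(t)`. -/
def Ghat (Γ : ℝ → ℝ) : ℝ → ℝ := fun t => t - Γ t

/-- `Γ̃(t) = φ(t) - Γ(t)`. -/
def Gtil (φ Γ : ℝ → ℝ) : ℝ → ℝ := fun t => φ t - Γ t

/-- The (signed) total variation `V_a^b(f)` of `f` on `[a, b] ⊆ [0, 1]`, with
the conventions `V_b^a(f) = -V_a^b(f)` and `V_a^a(f) = 0`. -/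
noncomputable def sV (f : ℝ → ℝ) (a b : ℝ) : ℝ := variationOnFromTo f (Set.Icc 0 1) a b

/-- `f₁(x, y) = x - (1/2) (V_{φ⁻¹(y)}^x(Γ̂) + Γ̂(x) + Γ̂(φ⁻¹(y)))`, where `ψ = φ⁻¹`. -/
noncomputable def f1 (ψ Γ : ℝ → ℝ) (x y : ℝ) : ℝ :=
  x - (1/2) * (sV (Ghat Γ) (ψ y) x + Ghat Γ x + Ghat Γ (ψ y))

/-- `f₂(x, y) = y - (1/2) (V_x^{φ⁻¹(y)}(Γ̃) + Γ̃(x) + Γ̃(φ⁻¹(y)))`, where `ψ = φ⁻¹`. -/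
noncomputable def f2 (φ ψ Γ : ℝ → ℝ) (x y : ℝ) : ℝ :=
  y - (1/2) * (sV (Gtil φ Γ) x (ψ y) + Gtil φ Γ x + Gtil φ Γ (ψ y))

/-- `C₁(x, y) = min {x, y, f₁(x, y)}`. -/
noncomputable def C1 (ψ Γ : ℝ → ℝ) (x y : ℝ) : ℝ := min x (min y (f1 ψ Γ x y))

/-- `C₂(x, y) = min {x, y, f₂(x, y)}`. -/
noncomputable def C2 (φ ψ Γ : ℝ → ℝ) (x y : ℝ) : ℝ := min x (min y (f2 φ ψ Γ x y))

/-- The φ-splice `C₂ ▵_φ C₁`: equal to `C₁` when `y ≤ φ(x)`, to `C₂` when `y ≥ φ(x)`. -/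
noncomputable def splice (φ ψ Γ : ℝ → ℝ) (x y : ℝ) : ℝ :=
  if y ≤ φ x then C1 ψ Γ x y else C2 φ ψ Γ x y

/-- A copula on `[0,1]²`: boundary conditions and 2-increasingness. -/
def IsCopula (C : ℝ → ℝ → ℝ) : Prop :=
  (∀ x ∈ Set.Icc (0:ℝ) 1, ∀ y ∈ Set.Icc (0:ℝ) 1, C x y ∈ Set.Icc (0:ℝ) 1) ∧
  (∀ x ∈ Set.Icc (0:ℝ) 1, C x 0 = 0 ∧ C 0 x = 0 ∧ C x 1 = x ∧ C 1 x = x) ∧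
  (∀ x₁ x₂ y₁ y₂ : ℝ, x₁ ∈ Set.Icc (0:ℝ) 1 → x₂ ∈ Set.Icc (0:ℝ) 1 →
    y₁ ∈ Set.Icc (0:ℝ) 1 → y₂ ∈ Set.Icc (0:ℝ) 1 → x₁ ≤ x₂ → y₁ ≤ y₂ →
    0 ≤ C x₂ y₂ - C x₂ y₁ - C x₁ y₂ + C x₁ y₁)

/-- The greatest quasi-copula `A_Γ` with curvilinear section `Γ` (`ψ = φ⁻¹`). -/
noncomputable def AG (φ ψ Γ : ℝ → ℝ) (x y : ℝ) : ℝ :=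
  if y ≤ φ x then min y (x - sSup (Ghat Γ '' Set.Icc (ψ y) x))
  else min x (y - sSup (Gtil φ Γ '' Set.Icc x (ψ y)))

/-- Variation bound for a quasiconcave finite sequence. -/
lemma seq_var_le (v : ℕ → ℝ) (n : ℕ) (M ca cb : ℝ)
    (hM : ∀ i, i ≤ n → v i ≤ M) (hca : ca ≤ M) (hcb : cb ≤ M)
    (hq : ∀ i j k : ℕ, i ≤ j → j ≤ k → k ≤ n → min (v i) (v k) ≤ v j)
    (h0 : ∀ j, j ≤ n → min ca (v j) ≤ v 0)
    (hn : ∀ j, j ≤ n → min (v j) cb ≤ v n) :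
    ∑ i ∈ Finset.range n, |v (i + 1) - v i| ≤ 2 * M - ca - cb := by
  obtain ⟨m, hm_mem, hm⟩ := Finset.exists_max_image (Finset.range (n + 1)) v ⟨0, by simp⟩
  rw [Finset.mem_range] at hm_mem
  have hmn : m ≤ n := Nat.lt_succ_iff.mp hm_mem
  have hmax : ∀ i, i ≤ n → v i ≤ v m := fun i hi =>
    hm i (Finset.mem_range.mpr (Nat.lt_succ_iff.mpr hi))
  have hinc : ∀ i j, i ≤ j → j ≤ m → v i ≤ v j := by
    intro i j hij hjm
    have h := hq i j m hij hjm hmn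
    have hi : v i ≤ v m := hmax i ((hij.trans hjm).trans hmn)
    rwa [min_eq_left hi] at h
  have hdec : ∀ i j, m ≤ i → i ≤ j → j ≤ n → v j ≤ v i := by
    intro i j hmi hij hjn
    have h := hq m i j hmi hij hjn
    have hj : v j ≤ v m := hmax j hjn
    rwa [min_eq_right hj] at h
  have hsplit : ∑ i ∈ Finset.range n, |v (i + 1) - v i|
      = ∑ i ∈ Finset.range m, |v (i + 1) - v i| + ∑ i ∈ Finset.Ico m n, |v (i + 1) - v i| := by
    rw [Finset.range_eq_Ico, Finset.range_eq_Ico]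
    exact (Finset.sum_Ico_consecutive (fun i => |v (i + 1) - v i|) (Nat.zero_le m) hmn).symm
  have h1 : ∑ i ∈ Finset.range m, |v (i + 1) - v i| = v m - v 0 := by
    rw [show ∑ i ∈ Finset.range m, |v (i + 1) - v i|
        = ∑ i ∈ Finset.range m, (v (i + 1) - v i) from
      Finset.sum_congr rfl fun i hi => abs_of_nonneg (sub_nonneg.mpr
        (hinc i (i + 1) (Nat.le_succ i) (Finset.mem_range.mp hi)))]
    exact Finset.sum_range_sub v m
  have h2 : ∑ i ∈ Finset.Ico m n, |v (i + 1) - v i| = v m - v n := by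
    have he : ∀ i ∈ Finset.Ico m n, |v (i + 1) - v i| = v i - v (i + 1) := by
      intro i hi
      rw [Finset.mem_Ico] at hi
      rw [abs_sub_comm, abs_of_nonneg (sub_nonneg.mpr
        (hdec i (i + 1) hi.1 (Nat.le_succ i) hi.2))]
    rw [Finset.sum_congr rfl he, Finset.sum_Ico_eq_sum_range]
    have ht := Finset.sum_range_sub' (fun j => v (m + j)) (n - m)
    simpa [Nat.add_sub_cancel' hmn, add_assoc] using ht
  have hv0 := h0 m hmn
  have hvn := hn m hmn
  have hvm := hM m hmn
  have e1 : v m - v 0 ≤ M - ca := by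
    rcases le_total ca (v m) with h | h
    · rw [min_eq_left h] at hv0; linarith
    · rw [min_eq_right h] at hv0; linarith
  have e2 : v m - v n ≤ M - cb := by
    rcases le_total (v m) cb with h | h
    · rw [min_eq_left h] at hvn; linarith
    · rw [min_eq_right h] at hvn; linarith
  rw [hsplit, h1, h2]
  linarith

/-- The total variation of a quasiconcave function on `[a,b]` equals `2M - f a - f b`. -/
lemma evar_quasiconcave {f : ℝ → ℝ} {a b M : ℝ} (hab : a ≤ b)
    (hub : ∀ t ∈ Icc a b, f t ≤ M)
    (happ : ∀ ε : ℝ, 0 < ε → ∃ t ∈ Icc a b, M - ε < f t)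
    (hq : ∀ p ∈ Icc a b, ∀ q ∈ Icc a b, ∀ r ∈ Icc p q, min (f p) (f q) ≤ f r) :
    eVariationOn f (Icc a b) = ENNReal.ofReal (2 * M - f a - f b) := by
  have hamem : a ∈ Icc a b := ⟨le_rfl, hab⟩
  have hbmem : b ∈ Icc a b := ⟨hab, le_rfl⟩
  have hfa : f a ≤ M := hub a hamem
  have hfb : f b ≤ M := hub b hbmem
  have hle : eVariationOn f (Icc a b) ≤ ENNReal.ofReal (2 * M - f a - f b) := by
    rw [eVariationOn]
    apply iSup_le
    rintro ⟨n, u, hu, us⟩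
    have he : ∑ i ∈ Finset.range n, edist (f (u (i + 1))) (f (u i))
        = ENNReal.ofReal (∑ i ∈ Finset.range n, |f (u (i + 1)) - f (u i)|) := by
      rw [ENNReal.ofReal_sum_of_nonneg (fun i _ => abs_nonneg _)]
      refine Finset.sum_congr rfl fun i _ => ?_
      rw [edist_dist, Real.dist_eq]
    rw [he]
    apply ENNReal.ofReal_le_ofReal
    exact seq_var_le (fun i => f (u i)) n M (f a) (f b) (fun i _ => hub _ (us i)) hfa hfb
      (fun i j k hij hjk _ => hq (u i) (us i) (u k) (us k) (u j) ⟨hu hij, hu hjk⟩)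
      (fun j _ => hq a hamem (u j) (us j) (u 0) ⟨(us 0).1, hu (Nat.zero_le j)⟩)
      (fun j hjn => hq (u j) (us j) b hbmem (u n) ⟨hu hjn, (us n).2⟩)
  refine le_antisymm hle ?_
  have hne : eVariationOn f (Icc a b) ≠ ⊤ := (lt_of_le_of_lt hle ENNReal.ofReal_lt_top).ne
  rw [← ENNReal.ofReal_toReal hne]
  apply ENNReal.ofReal_le_ofReal
  refine le_of_forall_pos_le_add fun ε hε => ?_
  obtain ⟨t, ht, hft⟩ := happ (ε / 2) (by linarith)
  have key : ENNReal.ofReal ((f t - f a) + (f t - f b)) ≤ eVariationOn f (Icc a b) := by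
    have hsplit := eVariationOn.Icc_add_Icc f (s := Icc a b) ht.1 ht.2 ht
    calc ENNReal.ofReal ((f t - f a) + (f t - f b))
        ≤ ENNReal.ofReal (f t - f a) + ENNReal.ofReal (f t - f b) := ENNReal.ofReal_add_le
      _ ≤ edist (f a) (f t) + edist (f t) (f b) := by
          gcongr
          · rw [edist_dist, Real.dist_eq]
            exact ENNReal.ofReal_le_ofReal (by rw [abs_sub_comm]; exact le_abs_self _)
          · rw [edist_dist, Real.dist_eq]
            exact ENNReal.ofReal_le_ofReal (le_abs_self _)
      _ ≤ eVariationOn f (Icc a b ∩ Icc a t) + eVariationOn f (Icc a b ∩ Icc t b) := by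
          gcongr
          · exact eVariationOn.edist_le f ⟨hamem, le_rfl, ht.1⟩ ⟨ht, ht.1, le_rfl⟩
          · exact eVariationOn.edist_le f ⟨ht, le_rfl, ht.2⟩ ⟨hbmem, ht.2, le_rfl⟩
      _ = eVariationOn f (Icc a b ∩ Icc a b) := hsplit
      _ = eVariationOn f (Icc a b) := by rw [inter_self]
  have h2 : (f t - f a) + (f t - f b) ≤ (eVariationOn f (Icc a b)).toReal := by
    rw [← ENNReal.ofReal_le_iff_le_toReal hne]
    exact key
  linarith

/-- `sV` of a quasiconcave function. -/
lemma sV_quasiconcave {f : ℝ → ℝ} {a b : ℝ} (h0a : 0 ≤ a) (hab : a ≤ b) (hb1 : b ≤ 1)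
    (hbd : ∀ t ∈ Icc a b, f t ≤ 1)
    (hq : ∀ p ∈ Icc a b, ∀ q ∈ Icc a b, ∀ r ∈ Icc p q, min (f p) (f q) ≤ f r) :
    sV f a b = 2 * sSup (f '' Icc a b) - f a - f b
      ∧ f a ≤ sSup (f '' Icc a b) ∧ f b ≤ sSup (f '' Icc a b) := by
  set M := sSup (f '' Icc a b) with hMdef
  have hnonempty : (f '' Icc a b).Nonempty := ⟨f a, mem_image_of_mem f ⟨le_rfl, hab⟩⟩
  have hbdd : BddAbove (f '' Icc a b) := ⟨1, by rintro _ ⟨t, ht, rfl⟩; exact hbd t ht⟩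
  have hub : ∀ t ∈ Icc a b, f t ≤ M := fun t ht => le_csSup hbdd (mem_image_of_mem f ht)
  have happ : ∀ ε : ℝ, 0 < ε → ∃ t ∈ Icc a b, M - ε < f t := by
    intro ε hε
    obtain ⟨yy, hyy, hyy2⟩ := exists_lt_of_lt_csSup hnonempty (show M - ε < M by linarith)
    obtain ⟨t, ht, rfl⟩ := hyy
    exact ⟨t, ht, hyy2⟩
  have hev := evar_quasiconcave hab hub happ hq
  have hMa := hub a ⟨le_rfl, hab⟩
  have hMb := hub b ⟨hab, le_rfl⟩
  refine ⟨?_, hMa, hMb⟩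
  rw [sV, variationOnFromTo.eq_of_le f _ hab,
    inter_eq_self_of_subset_right (Icc_subset_Icc h0a hb1), hev,
    ENNReal.toReal_ofReal (by linarith)]

/-- Quasiconcavity on subintervals from the `min`-inequality on `[0,1]`. -/
lemma quasi_of_min (g : ℝ → ℝ)
    (hg : ∀ s ∈ Icc (0:ℝ) 1, ∀ t ∈ Icc (0:ℝ) 1, ∀ lam ∈ Icc (0:ℝ) 1,
      min (g s) (g t) ≤ g (lam * s + (1 - lam) * t))
    {a b : ℝ} (h0a : 0 ≤ a) (hb1 : b ≤ 1) :
    ∀ p ∈ Icc a b, ∀ q ∈ Icc a b, ∀ r ∈ Icc p q, min (g p) (g q) ≤ g r := by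
  intro p hp q hq r hr
  have hp1 : p ∈ Icc (0:ℝ) 1 := ⟨h0a.trans hp.1, hp.2.trans hb1⟩
  have hq1 : q ∈ Icc (0:ℝ) 1 := ⟨h0a.trans hq.1, hq.2.trans hb1⟩
  rcases eq_or_lt_of_le (hr.1.trans hr.2) with heq | hlt
  · have hrp : r = p := le_antisymm (by rw [heq]; exact hr.2) hr.1
    rw [hrp]
    exact min_le_left _ _
  · have hne : q - p ≠ 0 := sub_ne_zero.mpr (ne_of_gt hlt)
    set lam := (q - r) / (q - p) with hlam
    have h1 : lam ∈ Icc (0:ℝ) 1 :=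
      ⟨div_nonneg (by linarith [hr.2]) (by linarith),
        (div_le_one (by linarith)).mpr (by linarith [hr.1])⟩
    have h2 : lam * p + (1 - lam) * q = r := by
      have h3 : lam * (q - p) = q - r := by rw [hlam]; exact div_mul_cancel₀ _ hne
      linarith
    calc min (g p) (g q) ≤ g (lam * p + (1 - lam) * q) := hg p hp1 q hq1 lam h1
      _ = g r := by rw [h2]

theorem stmt_18
    (φ Γ : ℝ → ℝ)
    (hφcont : ContinuousOn φ (Set.Icc 0 1))
    (hφmono : StrictMonoOn φ (Set.Icc 0 1))
    (hφ0 : φ 0 = 0) (hφ1 : φ 1 = 1)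
    (hΓrange : ∀ t ∈ Set.Icc (0:ℝ) 1, max 0 (t + φ t - 1) ≤ Γ t ∧ Γ t ≤ min t (φ t))
    (hΓlip : ∀ t₁ t₂ : ℝ, t₁ ∈ Set.Icc (0:ℝ) 1 → t₂ ∈ Set.Icc (0:ℝ) 1 → t₁ ≤ t₂ →
      0 ≤ Γ t₂ - Γ t₁ ∧ Γ t₂ - Γ t₁ ≤ (t₂ - t₁) + (φ t₂ - φ t₁))
    (ψ : ℝ → ℝ)
    (hψmem : ∀ y ∈ Set.Icc (0:ℝ) 1, ψ y ∈ Set.Icc (0:ℝ) 1)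
    (hψφ : ∀ t ∈ Set.Icc (0:ℝ) 1, ψ (φ t) = t)
    (hφψ : ∀ y ∈ Set.Icc (0:ℝ) 1, φ (ψ y) = y)
    (hsimple : ∀ x ∈ Set.Icc (0:ℝ) 1, ∀ y ∈ Set.Icc (0:ℝ) 1, ∀ lam ∈ Set.Icc (0:ℝ) 1,
      min (Ghat Γ x) (Ghat Γ y) ≤ Ghat Γ (lam * x + (1 - lam) * y) ∧
      min (Gtil φ Γ x) (Gtil φ Γ y) ≤ Gtil φ Γ (lam * x + (1 - lam) * y)) :
    ∀ x ∈ Set.Icc (0:ℝ) 1, ∀ y ∈ Set.Icc (0:ℝ) 1, splice φ ψ Γ x y = AG φ ψ Γ x y := by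
  intro x hx y hy
  have hψy := hψmem y hy
  have hφψy := hφψ y hy
  have hΓ0 : ∀ t ∈ Icc (0:ℝ) 1, 0 ≤ Γ t := fun t ht =>
    le_trans (le_max_left _ _) (hΓrange t ht).1
  have hφle1 : ∀ t ∈ Icc (0:ℝ) 1, φ t ≤ 1 := fun t ht =>
    hφ1 ▸ hφmono.monotoneOn ht (right_mem_Icc.mpr zero_le_one) ht.2
  have hGhat_le1 : ∀ t ∈ Icc (0:ℝ) 1, Ghat Γ t ≤ 1 := by
    intro t ht
    have := hΓ0 t ht
    simp only [Ghat]
    linarith [ht.2]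
  have hGhat0 : ∀ t ∈ Icc (0:ℝ) 1, 0 ≤ Ghat Γ t := by
    intro t ht
    have h := le_trans (hΓrange t ht).2 (min_le_left _ _)
    simp only [Ghat]
    linarith
  have hGtil_le1 : ∀ t ∈ Icc (0:ℝ) 1, Gtil φ Γ t ≤ 1 := by
    intro t ht
    have h1 := hΓ0 t ht
    have h2 := hφle1 t ht
    simp only [Gtil]
    linarith
  have hGtil0 : ∀ t ∈ Icc (0:ℝ) 1, 0 ≤ Gtil φ Γ t := by
    intro t ht
    have h := le_trans (hΓrange t ht).2 (min_le_right _ _)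
    simp only [Gtil]
    linarith
  by_cases hcase : y ≤ φ x
  · -- branch 1 : y ≤ φ x
    have hax : ψ y ≤ x := by
      by_contra h
      push_neg at h
      have := hφmono hx hψy h
      rw [hφψy] at this
      linarith
    have hqc := quasi_of_min (Ghat Γ)
      (fun s hs t ht lam hlam => (hsimple s hs t ht lam hlam).1) hψy.1 hx.2
    obtain ⟨hsV, hMa, hMb⟩ := sV_quasiconcave hψy.1 hax hx.2
      (fun t ht => hGhat_le1 t ⟨hψy.1.trans ht.1, ht.2.trans hx.2⟩) hqc
    set M := sSup (Ghat Γ '' Icc (ψ y) x) with hMdef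
    have hM0 : 0 ≤ M := le_trans (hGhat0 (ψ y) hψy) hMa
    have e1 : f1 ψ Γ x y = x - M := by
      rw [f1, hsV]
      ring
    simp only [splice, AG, C1, if_pos hcase, e1]
    rw [min_left_comm, min_eq_right (show x - M ≤ x by linarith)]
  · -- branch 2 : y > φ x
    push_neg at hcase
    have hax : x ≤ ψ y := by
      by_contra h
      push_neg at h
      have := hφmono hψy hx h
      rw [hφψy] at this
      linarith
    have hqc := quasi_of_min (Gtil φ Γ)
      (fun s hs t ht lam hlam => (hsimple s hs t ht lam hlam).2) hx.1 hψy.2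
    obtain ⟨hsV, hMa, hMb⟩ := sV_quasiconcave hx.1 hax hψy.2
      (fun t ht => hGtil_le1 t ⟨hx.1.trans ht.1, ht.2.trans hψy.2⟩) hqc
    set M := sSup (Gtil φ Γ '' Icc x (ψ y)) with hMdef
    have hM0 : 0 ≤ M := le_trans (hGtil0 x hx) hMa
    have e1 : f2 φ ψ Γ x y = y - M := by
      rw [f2, hsV]
      ring
    simp only [splice, AG, C2, if_neg (not_le.mpr hcase), e1]
    rw [min_eq_right (show y - M ≤ y by linarith)]
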